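/- If a randomized algorithm A run with size parameter n₀ fails on every graph of at most n₀ nodes with probability at most 1/n₀^c per local neighborhood, its runtime t satisfies Δ^{1+t+r} ≤ n₀, and the output of each node is a function of its radius-t neighborhood, then on any graph G of maximum degree Δ (of arbitrary size), for each node v the probability that the radius-r neighborhood of v is labeled incorrectly is at most 1/n₀^c. -/

import Mathlib

/-- Encode a walk as a list of neighbor indices. -/
def encWalk {m Δ : ℕ} (G : SimpleGraph (Fin m)) (ι : ∀ w : Fin m, {u // G.Adj w u} → Fin Δ) :
    ∀ {a b : Fin m}, G.Walk a b → List (Fin Δ)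
  | _, _, .nil => []
  | a, _, .cons h p => ι a ⟨_, h⟩ :: encWalk G ι p

lemma encWalk_length {m Δ : ℕ} (G : SimpleGraph (Fin m)) (ι : ∀ w : Fin m, {u // G.Adj w u} → Fin Δ)
    {a b : Fin m} (p : G.Walk a b) : (encWalk G ι p).length = p.length := by
  induction p with
  | nil => rfl
  | cons h p ih => simp [encWalk, ih]

lemma encWalk_inj {m Δ : ℕ} (G : SimpleGraph (Fin m)) (ι : ∀ w : Fin m, {u // G.Adj w u} → Fin Δ)
    (hι : ∀ w, Function.Injective (ι w)) {a b c : Fin m} (p : G.Walk a b) (q : G.Walk a c)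
    (h : encWalk G ι p = encWalk G ι q) : b = c := by
  induction p generalizing c with
  | nil =>
    cases q with
    | nil => rfl
    | cons h' q' => simp [encWalk] at h
  | cons h1 p' ih =>
    cases q with
    | nil => simp [encWalk] at h
    | cons h2 q' =>
      rw [encWalk, encWalk, List.cons_eq_cons] at h
      obtain ⟨hhead, htail⟩ := h
      have := hι _ hhead
      rw [Subtype.mk.injEq] at this
      subst this
      exact ih q' htail

lemma my_geom_le {Δ : ℕ} (hΔ : 2 ≤ Δ) (R : ℕ) : ∑ k ∈ Finset.range (R + 1), Δ ^ k ≤ Δ ^ (R + 1) := by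
  induction R with
  | zero => simpa using le_trans one_le_two (hΔ.trans_eq (pow_one Δ).symm)
  | succ R ih =>
    rw [Finset.sum_range_succ]
    calc ∑ k ∈ Finset.range (R + 1), Δ ^ k + Δ ^ (R + 1)
        ≤ Δ ^ (R + 1) + Δ ^ (R + 1) := by gcongr
      _ = 2 * Δ ^ (R + 1) := by ring
      _ ≤ Δ * Δ ^ (R + 1) := by gcongr
      _ = Δ ^ (R + 2) := by ring


/-- The `(t+r)`-ball of `v` in `G`. -/
def Ball {m : ℕ} (G : SimpleGraph (Fin m)) (v x : Fin m) (R : ℕ) : Prop :=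
  ∃ p : G.Walk v x, p.length ≤ R

/-- If a randomized local algorithm with runtime `t` (whose per-node failure predicate
depends only on the radius-`(t+r)` neighborhood, including random bits) fails at every node
of every graph with at most `n₀` nodes and maximum degree `Δ` with probability at most
`1/n₀^c`, and `Δ^(1+t+r) ≤ n₀`, then the same local failure bound holds on graphs of
maximum degree `Δ` of arbitrary size. -/
theorem local_failure_probability_transfer
    (Δ r t c n₀ : ℕ) (hΔ : 2 ≤ Δ) (hr : 1 ≤ r) (hc : 1 ≤ c)
    (hsize : Δ ^ (1 + t + r) ≤ n₀)
    (B : Type) [Fintype B] [Nonempty B]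
    (Fail : ∀ m : ℕ, SimpleGraph (Fin m) → (Fin m → B) → Fin m → Prop)
    -- locality: the failure event at `v` only depends on the radius-`(t+r)` neighborhood
    -- of `v` (graph structure and random bits), up to embeddings of that neighborhood
    (hlocal : ∀ (m m' : ℕ) (G : SimpleGraph (Fin m)) (G' : SimpleGraph (Fin m'))
        (φ : Fin m → Fin m') (v : Fin m) (rb : Fin m → B) (rb' : Fin m' → B),
        (∀ x y : Fin m, Ball G v x (t + r) → Ball G v y (t + r) →
            ((G.Adj x y ↔ G'.Adj (φ x) (φ y)) ∧ (φ x = φ y → x = y))) →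
        (∀ x, Ball G v x (t + r) → rb' (φ x) = rb x) →
        (∀ x' : Fin m', Ball G' (φ v) x' (t + r) →
            ∃ x, Ball G v x (t + r) ∧ φ x = x') →
        (Fail m G rb v ↔ Fail m' G' rb' (φ v)))
    -- failure bound on graphs with at most `n₀` nodes
    (hsmall : ∀ m, m ≤ n₀ → ∀ G : SimpleGraph (Fin m),
        (∀ v, {u | G.Adj v u}.ncard ≤ Δ) → ∀ v : Fin m,
        (Nat.card {rb : Fin m → B // Fail m G rb v} : ℝ) /
          (Fintype.card (Fin m → B) : ℝ) ≤ 1 / (n₀ : ℝ) ^ c) :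
    ∀ m : ℕ, ∀ G : SimpleGraph (Fin m),
      (∀ v, {u | G.Adj v u}.ncard ≤ Δ) → ∀ v : Fin m,
      (Nat.card {rb : Fin m → B // Fail m G rb v} : ℝ) /
        (Fintype.card (Fin m → B) : ℝ) ≤ 1 / (n₀ : ℝ) ^ c := by
  classical
  intro m G hGdeg v
  -- neighbor index injections
  have hemb : ∀ w : Fin m, ∃ f : {u // G.Adj w u} → Fin Δ, Function.Injective f := by
    intro w
    haveI : Fintype {u // G.Adj w u} := Fintype.ofFinite _
    have h0 : Nat.card {u // G.Adj w u} ≤ Δ := by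
      have h2 := hGdeg w
      rwa [← Nat.card_coe_set_eq] at h2
    have h1 : Fintype.card {u // G.Adj w u} ≤ Fintype.card (Fin Δ) := by
      rw [Fintype.card_fin, ← Nat.card_eq_fintype_card]
      exact h0
    obtain ⟨f⟩ := Function.Embedding.nonempty_of_card_le h1
    exact ⟨f, f.injective⟩
  choose ι hι using hemb
  -- the ball around v
  set Sset : Set (Fin m) := {x | Ball G v x (t + r)} with hSset
  have hvball : Ball G v v (t + r) := ⟨SimpleGraph.Walk.nil, by simp⟩
  haveI : Fintype ↥Sset := Fintype.ofFinite _
  haveI : Fintype ↥Ssetᶜ := Fintype.ofFinite _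
  set n' : ℕ := Fintype.card ↥Sset with hn'
  set e : ↥Sset ≃ Fin n' := Fintype.equivFin ↥Sset with he
  -- encoding of elements of the ball
  have hmem : ∀ x : ↥Sset, Ball G v x.1 (t + r) := fun x => x.2
  let W : ↥Sset → List (Fin Δ) := fun x => encWalk G ι (hmem x).choose
  have hWlen : ∀ x, (W x).length ≤ t + r := by
    intro x
    rw [encWalk_length]
    exact (hmem x).choose_spec
  have hWinj : Function.Injective W := by
    intro x y hxy
    exact Subtype.ext (encWalk_inj G ι hι _ _ hxy)
  -- cardinality bound on the ball
  have hcard : n' ≤ n₀ := by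
    have hinj : Function.Injective (fun x : ↥Sset =>
        (⟨⟨(W x).length, Nat.lt_succ_of_le (hWlen x)⟩, fun i => (W x).get i⟩ :
          Σ k : Fin (t + r + 1), Fin (k : ℕ) → Fin Δ)) := by
      intro x y hxy
      apply hWinj
      have h2 := congrArg
        (fun s : (Σ k : Fin (t + r + 1), Fin (k : ℕ) → Fin Δ) => List.ofFn s.2) hxy
      simpa [List.ofFn_get] using h2
    have h1 : n' ≤ Fintype.card (Σ k : Fin (t + r + 1), Fin (k : ℕ) → Fin Δ) :=
      Fintype.card_le_of_injective _ hinj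
    have h2 : Fintype.card (Σ k : Fin (t + r + 1), Fin (k : ℕ) → Fin Δ)
        = ∑ k ∈ Finset.range (t + r + 1), Δ ^ k := by
      rw [Fintype.card_sigma, ← Fin.sum_univ_eq_sum_range]
      simp
    have h3 := my_geom_le hΔ (t + r)
    have h4 : Δ ^ (t + r + 1) = Δ ^ (1 + t + r) := by rw [show t + r + 1 = 1 + t + r by omega]
    omega
  -- the induced graph on the ball
  set G' : SimpleGraph (Fin n') :=
    { Adj := fun a b => G.Adj (e.symm a).1 (e.symm b).1,
      symm := ⟨fun a b h => G.adj_symm h⟩,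
      loopless := ⟨fun a h => G.irrefl h⟩ } with hG'def
  have hAdj' : ∀ a b, G'.Adj a b ↔ G.Adj (e.symm a).1 (e.symm b).1 := fun a b => Iff.rfl
  set φ : Fin m → Fin n' :=
    fun x => if h : Ball G v x (t + r) then e ⟨x, h⟩ else e ⟨v, hvball⟩ with hφdef
  have hφ : ∀ x (h : Ball G v x (t + r)), φ x = e ⟨x, h⟩ := fun x h => dif_pos h
  -- degree bound for G'
  have hG'deg : ∀ a : Fin n', {u | G'.Adj a u}.ncard ≤ Δ := by
    intro a
    have hinj : Function.Injective (fun u : Fin n' => (e.symm u).1) := by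
      intro u₁ u₂ h
      exact e.symm.injective (Subtype.ext h)
    have hsub : (fun u : Fin n' => (e.symm u).1) '' {u | G'.Adj a u}
        ⊆ {w | G.Adj (e.symm a).1 w} := by
      rintro _ ⟨u, hu, rfl⟩
      exact hu
    calc {u | G'.Adj a u}.ncard
        = ((fun u : Fin n' => (e.symm u).1) '' {u | G'.Adj a u}).ncard :=
          (Set.ncard_image_of_injective _ hinj).symm
      _ ≤ {w | G.Adj (e.symm a).1 w}.ncard := Set.ncard_le_ncard hsub (Set.toFinite _)
      _ ≤ Δ := hGdeg _
  -- transfer of the failure event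
  have key : ∀ rb : Fin m → B,
      (Fail m G rb v ↔ Fail n' G' (fun a => rb (e.symm a).1) (φ v)) := by
    intro rb
    apply hlocal m n' G G' φ v rb (fun a => rb (e.symm a).1)
    · intro x y hx hy
      rw [hφ x hx, hφ y hy]
      constructor
      · rw [hAdj', Equiv.symm_apply_apply, Equiv.symm_apply_apply]
      · intro h
        have h2 := e.injective h
        exact congrArg Subtype.val h2
    · intro x hx
      rw [hφ x hx]
      simp
    · intro x' _
      refine ⟨(e.symm x').1, (e.symm x').2, ?_⟩
      rw [hφ _ (e.symm x').2, Subtype.coe_eta, Equiv.apply_symm_apply]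
  -- splitting the random bits
  let F : (Fin m → B) ≃ (Fin n' → B) × (↥Ssetᶜ → B) :=
  { toFun := fun rb => (fun a => rb (e.symm a).1, fun x => rb x.1),
    invFun := fun p x => if h : x ∈ Sset then p.1 (e ⟨x, h⟩) else p.2 ⟨x, h⟩,
    left_inv := by
      intro rb
      funext x
      by_cases h : x ∈ Sset
      · simp only [dif_pos h, Equiv.symm_apply_apply]
      · simp only [dif_neg h]
    right_inv := by
      intro p
      refine Prod.ext ?_ ?_
      · funext a
        simp only [dif_pos (e.symm a).2, Subtype.coe_eta, Equiv.apply_symm_apply]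
      · funext x
        simp only [dif_neg x.2] }
  have keyF : ∀ rb, Fail m G rb v ↔ Fail n' G' (F rb).1 (φ v) := key
  let E1 : {rb : Fin m → B // Fail m G rb v} ≃
      {p : (Fin n' → B) × (↥Ssetᶜ → B) // Fail n' G' p.1 (φ v)} :=
    F.subtypeEquiv keyF
  let E2 : {p : (Fin n' → B) × (↥Ssetᶜ → B) // Fail n' G' p.1 (φ v)} ≃
      {g : Fin n' → B // Fail n' G' g (φ v)} × (↥Ssetᶜ → B) :=
    Equiv.prodSubtypeFstEquivSubtypeProd (p := fun g : Fin n' → B => Fail n' G' g (φ v))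
  have hN : (Nat.card {rb : Fin m → B // Fail m G rb v})
      = Nat.card {g : Fin n' → B // Fail n' G' g (φ v)} * Fintype.card (↥Ssetᶜ → B) := by
    rw [Nat.card_congr (E1.trans E2), Nat.card_prod]
    congr 1
    exact Nat.card_eq_fintype_card
  have hC : Fintype.card (Fin m → B)
      = Fintype.card (Fin n' → B) * Fintype.card (↥Ssetᶜ → B) := by
    rw [Fintype.card_congr F, Fintype.card_prod]
  have hK : (0 : ℝ) < (Fintype.card (↥Ssetᶜ → B) : ℝ) := by
    exact_mod_cast Fintype.card_pos
  rw [hN, hC]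
  push_cast
  rw [mul_div_mul_right _ _ (ne_of_gt hK)]
  exact hsmall n' hcard G' hG'deg (φ v)
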